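/- Let S be an isometry on a Hilbert space H and T a bounded operator with S* T S = T. If T is an isometry (T* T = I), then T commutes with S, i.e., S T = T S. -/
import Mathlib

open ContinuousLinearMap

theorem isometric_toeplitz_commutes {H : Type*} [NormedAddCommGroup H]
    [InnerProductSpace ℂ H] [CompleteSpace H] (S T : H →L[ℂ] H)
    (hS : adjoint S * S = 1)
    (hT : adjoint S * T * S = T)
    (hTiso : adjoint T * T = 1) :
    S * T = T * S := by
  have hT' : adjoint S * adjoint T * S = adjoint T := by
    have h := congrArg star hT
    simp only [star_mul, star_eq_adjoint, adjoint_adjoint] at h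
    rw [← mul_assoc] at h
    exact h
  set A := T * S - S * T with hAdef
  have hA : adjoint A * A = 0 := by
    have hadjA : adjoint A = adjoint S * adjoint T - adjoint T * adjoint S := by
      rw [hAdef]; simp only [← star_eq_adjoint, star_sub, star_mul]
    have expand : adjoint A * A =
        (adjoint S * adjoint T) * (T * S) - (adjoint S * adjoint T) * (S * T)
        - (adjoint T * adjoint S) * (T * S) + (adjoint T * adjoint S) * (S * T) := by
      rw [hadjA, hAdef]; noncomm_ring
    have h1 : (adjoint S * adjoint T) * (T * S) = 1 := by
      calc (adjoint S * adjoint T) * (T * S) = adjoint S * (adjoint T * T) * S := by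
            noncomm_ring
        _ = adjoint S * S := by rw [hTiso]; noncomm_ring
        _ = 1 := hS
    have h2 : (adjoint S * adjoint T) * (S * T) = 1 := by
      calc (adjoint S * adjoint T) * (S * T) = (adjoint S * adjoint T * S) * T := by
            noncomm_ring
        _ = adjoint T * T := by rw [hT']
        _ = 1 := hTiso
    have h3 : (adjoint T * adjoint S) * (T * S) = 1 := by
      calc (adjoint T * adjoint S) * (T * S) = adjoint T * (adjoint S * T * S) := by
            noncomm_ring
        _ = adjoint T * T := by rw [hT]
        _ = 1 := hTiso
    have h4 : (adjoint T * adjoint S) * (S * T) = 1 := by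
      calc (adjoint T * adjoint S) * (S * T) = adjoint T * (adjoint S * S) * T := by
            noncomm_ring
        _ = adjoint T * T := by rw [hS]; noncomm_ring
        _ = 1 := hTiso
    rw [expand, h1, h2, h3, h4]; noncomm_ring
  have hnorm : ‖A‖ * ‖A‖ = 0 := by
    rw [← norm_adjoint_comp_self A, show adjoint A ∘L A = adjoint A * A from rfl, hA,
      norm_zero]
  have hA0 : A = 0 := by
    have := mul_self_eq_zero.mp hnorm
    exact norm_eq_zero.mp this
  have := sub_eq_zero.mp hA0
  exact this.symm
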